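/- Existence of a locally correct discrete Fréchet matching: for any two finite sequences of points p₀,...,p_m and q₀,...,q_n in ℝ^d, there exists a monotone coupling (a monotone lattice path from (0,0) to (m,n)) π such that every contiguous subpath of π realizes the discrete Fréchet distance between the corresponding vertex subsequences. -/

import Mathlib

def IsStep (u v : ℕ × ℕ) : Prop :=
  (v.1 = u.1 + 1 ∧ v.2 = u.2) ∨ (v.1 = u.1 ∧ v.2 = u.2 + 1) ∨
    (v.1 = u.1 + 1 ∧ v.2 = u.2 + 1)

def IsGridPath (π : ℕ → ℕ × ℕ) (k : ℕ) (u v : ℕ × ℕ) : Prop :=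
  1 ≤ k ∧ π 0 = u ∧ π (k - 1) = v ∧ ∀ i, i + 1 < k → IsStep (π i) (π (i + 1))

namespace LCFM

lemma isStep_le {u v : ℕ × ℕ} (h : IsStep u v) : u ≤ v := by
  obtain ⟨h1, h2⟩ | ⟨h1, h2⟩ | ⟨h1, h2⟩ := h <;>
    exact Prod.le_def.2 ⟨by omega, by omega⟩

lemma isStep_sum {u v : ℕ × ℕ} (h : IsStep u v) : u.1 + u.2 + 1 ≤ v.1 + v.2 := by
  obtain ⟨h1, h2⟩ | ⟨h1, h2⟩ | ⟨h1, h2⟩ := h <;> omega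

lemma path_mono {π : ℕ → ℕ × ℕ} {k : ℕ} {u v : ℕ × ℕ} (h : IsGridPath π k u v) :
    ∀ j, j ≤ k - 1 → ∀ i, i ≤ j → π i ≤ π j := by
  intro j
  induction j with
  | zero =>
    intro _ i hi
    interval_cases i
    exact le_rfl
  | succ j ih =>
    intro hj i hi
    rcases Nat.lt_or_ge i (j + 1) with h' | h'
    · exact le_trans (ih (by omega) i (by omega)) (isStep_le (h.2.2.2 j (by omega)))
    · have hij : i = j + 1 := by omega
      subst hij
      exact le_rfl

lemma path_le_end {π : ℕ → ℕ × ℕ} {k : ℕ} {u v : ℕ × ℕ} (h : IsGridPath π k u v)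
    {t : ℕ} (ht : t ≤ k - 1) : π t ≤ v :=
  h.2.2.1 ▸ path_mono h (k - 1) le_rfl t ht

lemma path_sum {π : ℕ → ℕ × ℕ} {k : ℕ} {u v : ℕ × ℕ} (h : IsGridPath π k u v) :
    k - 1 + u.1 + u.2 ≤ v.1 + v.2 := by
  have key : ∀ t, t ≤ k - 1 → t + u.1 + u.2 ≤ (π t).1 + (π t).2 := by
    intro t
    induction t with
    | zero => intro _; rw [h.2.1]; omega
    | succ t ih =>
      intro ht
      have h2 := isStep_sum (h.2.2.2 t (by omega))
      have h3 := ih (by omega)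
      omega
  have := key (k - 1) le_rfl
  rw [h.2.2.1] at this
  exact this

/-- rank of a value: number of grid pairs with strictly smaller distance -/
noncomputable def rk (m n : ℕ) (D : ℕ × ℕ → NNReal) (v : NNReal) : ℕ :=
  ((Finset.Icc (0, 0) (m, n)).filter (fun ij => D ij < v)).card

lemma rk_lt {m n : ℕ} {D : ℕ × ℕ → NNReal} {u : ℕ × ℕ} {v : NNReal}
    (hu : u ≤ (m, n)) (huv : D u < v) : rk m n D (D u) < rk m n D v := by
  have hsub : (Finset.Icc (0, 0) (m, n)).filter (fun ij => D ij < D u) ⊆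
      (Finset.Icc (0, 0) (m, n)).filter (fun ij => D ij < v) :=
    Finset.monotone_filter_right _ (fun ij _ hij => lt_trans hij huv)
  refine Finset.card_lt_card ((Finset.ssubset_iff_of_subset hsub).2 ⟨u, ?_, ?_⟩)
  · exact Finset.mem_filter.2 ⟨Finset.mem_Icc.2 ⟨bot_le, hu⟩, huv⟩
  · intro hmem
    exact lt_irrefl _ (Finset.mem_filter.1 hmem).2

/-- the weight of a path: sum of exponential penalties -/
noncomputable def wt (m n : ℕ) (D : ℕ × ℕ → NNReal) (π : ℕ → ℕ × ℕ) (k : ℕ) : ℕ :=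
  ∑ t ∈ Finset.range k, (m + n + 2) ^ rk m n D (D (π t))

/-- splicing a replacement segment into a path -/
def splice (π π' : ℕ → ℕ × ℕ) (t₁ t₂ k' : ℕ) (t : ℕ) : ℕ × ℕ :=
  if t < t₁ then π t else if t < t₁ + k' then π' (t - t₁)
  else π (t + t₂ + 1 - (t₁ + k'))

lemma splice_gridpath {π π' : ℕ → ℕ × ℕ} {k k' t₁ t₂ : ℕ} {u v : ℕ × ℕ}
    (hπ : IsGridPath π k u v) (h12 : t₁ ≤ t₂) (h2k : t₂ < k)
    (hπ' : IsGridPath π' k' (π t₁) (π t₂)) :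
    IsGridPath (splice π π' t₁ t₂ k') (t₁ + k' + (k - 1 - t₂)) u v := by
  have hk1 : 1 ≤ k := hπ.1
  have hk'1 : 1 ≤ k' := hπ'.1
  refine ⟨by omega, ?_, ?_, ?_⟩
  · simp only [splice]
    split_ifs with h1 h2
    · exact hπ.2.1
    · have ht0 : t₁ = 0 := by omega
      rw [show (0 - t₁ : ℕ) = 0 by omega, hπ'.2.1, ht0, hπ.2.1]
    · omega
  · simp only [splice]
    split_ifs with h1 h2
    · omega
    · have e : t₁ + k' + (k - 1 - t₂) - 1 - t₁ = k' - 1 := by omega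
      have e2 : t₂ = k - 1 := by omega
      rw [e, hπ'.2.2.1, e2, hπ.2.2.1]
    · have e : t₁ + k' + (k - 1 - t₂) - 1 + t₂ + 1 - (t₁ + k') = k - 1 := by omega
      rw [e, hπ.2.2.1]
  · intro i hi
    simp only [splice]
    rcases Nat.lt_or_ge (i + 1) t₁ with hA | hA
    · rw [if_pos (by omega : i < t₁), if_pos hA]
      exact hπ.2.2.2 i (by omega)
    rcases Nat.lt_or_ge (i + 1) (t₁ + k') with hB | hB
    · rcases Nat.lt_or_ge i t₁ with hC | hC
      · rw [if_pos hC, if_neg (by omega), if_pos hB,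
          show (i + 1 - t₁ : ℕ) = 0 by omega, hπ'.2.1, show t₁ = i + 1 by omega]
        exact hπ.2.2.2 i (by omega)
      · rw [if_neg (by omega), if_pos (by omega), if_neg (by omega), if_pos hB,
          show (i + 1 - t₁ : ℕ) = (i - t₁) + 1 by omega]
        exact hπ'.2.2.2 (i - t₁) (by omega)
    · rcases Nat.lt_or_ge i (t₁ + k') with hC | hC
      · have hiT : t₁ ≤ i := by omega
        rw [if_neg (by omega), if_pos hC, if_neg (by omega), if_neg (by omega),
          show (i - t₁ : ℕ) = k' - 1 by omega, hπ'.2.2.1,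
          show (i + 1 + t₂ + 1 - (t₁ + k') : ℕ) = t₂ + 1 by omega]
        exact hπ.2.2.2 t₂ (by omega)
      · rw [if_neg (by omega), if_neg (by omega), if_neg (by omega), if_neg (by omega),
          show (i + 1 + t₂ + 1 - (t₁ + k') : ℕ) = (i + t₂ + 1 - (t₁ + k')) + 1 by omega]
        exact hπ.2.2.2 (i + t₂ + 1 - (t₁ + k')) (by omega)

/-- the exchange argument: on a weight-minimal path, every subpath is optimal -/
lemma exchange (m n : ℕ) (D : ℕ × ℕ → NNReal) {k : ℕ} {π : ℕ → ℕ × ℕ}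
    (hπ : IsGridPath π k (0, 0) (m, n))
    (hmin : ∀ k'' π'', IsGridPath π'' k'' (0, 0) (m, n) →
      wt m n D π k ≤ wt m n D π'' k'')
    {t₁ t₂ : ℕ} (h12 : t₁ ≤ t₂) (h2k : t₂ < k)
    {k' : ℕ} {π' : ℕ → ℕ × ℕ} (hπ' : IsGridPath π' k' (π t₁) (π t₂)) :
    (Finset.Icc t₁ t₂).sup (fun t => D (π t)) ≤
      (Finset.Icc 0 (k' - 1)).sup (fun s => D (π' s)) := by
  by_contra hcon
  push_neg at hcon
  have hk1 : 1 ≤ k := hπ.1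
  have hk'1 : 1 ≤ k' := hπ'.1
  set v : NNReal := (Finset.Icc t₁ t₂).sup (fun t => D (π t)) with hv
  obtain ⟨tstar, htmem, htv⟩ := Finset.exists_mem_eq_sup (Finset.Icc t₁ t₂)
    ⟨t₁, Finset.mem_Icc.2 ⟨le_rfl, h12⟩⟩ (fun t => D (π t))
  have hbox2 : π t₂ ≤ (m, n) := path_le_end hπ (by omega)
  have hbox' : ∀ s, s < k' → π' s ≤ (m, n) := by
    intro s hs
    exact le_trans (hπ'.2.2.1 ▸ path_mono hπ' (k' - 1) le_rfl s (by omega)) hbox2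
  have hDlt : ∀ s, s < k' → D (π' s) < v := by
    intro s hs
    exact lt_of_le_of_lt
      (Finset.le_sup (s := Finset.Icc 0 (k' - 1)) (f := fun s => D (π' s))
        (Finset.mem_Icc.2 ⟨Nat.zero_le _, by omega⟩)) hcon
  have hrk : ∀ s, s < k' → rk m n D (D (π' s)) < rk m n D v :=
    fun s hs => rk_lt (hbox' s hs) (hDlt s hs)
  have hrk1 : 1 ≤ rk m n D v := by
    have := hrk 0 hk'1
    omega
  have hk'le : k' ≤ m + n + 1 := by
    have h1 := path_sum hπ'
    have h2 : (π t₂).1 ≤ m := hbox2.1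
    have h3 : (π t₂).2 ≤ n := hbox2.2
    omega
  -- the spliced path
  set τ := splice π π' t₁ t₂ k' with hτdef
  set K := t₁ + k' + (k - 1 - t₂) with hK
  have hτ : IsGridPath τ K (0, 0) (m, n) := splice_gridpath hπ h12 h2k hπ'
  set M := m + n + 2 with hM
  set f : ℕ × ℕ → ℕ := fun w => M ^ rk m n D (D w) with hf
  -- decompose weights
  have hwπ : wt m n D π k =
      (∑ t ∈ Finset.Ico 0 t₁, f (π t)) + (∑ t ∈ Finset.Ico t₁ (t₂ + 1), f (π t)) +
        (∑ t ∈ Finset.Ico (t₂ + 1) k, f (π t)) := by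
    rw [wt, Finset.range_eq_Ico,
      ← Finset.sum_Ico_consecutive (fun t => f (π t)) (Nat.zero_le (t₂ + 1))
        (by omega : t₂ + 1 ≤ k),
      ← Finset.sum_Ico_consecutive (fun t => f (π t)) (Nat.zero_le t₁)
        (by omega : t₁ ≤ t₂ + 1)]
  have hwτ : wt m n D τ K =
      (∑ t ∈ Finset.Ico 0 t₁, f (π t)) + (∑ s ∈ Finset.Ico 0 k', f (π' s)) +
        (∑ t ∈ Finset.Ico (t₂ + 1) k, f (π t)) := by
    rw [wt, Finset.range_eq_Ico,
      ← Finset.sum_Ico_consecutive (fun t => f (τ t)) (Nat.zero_le (t₁ + k'))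
        (by omega : t₁ + k' ≤ K),
      ← Finset.sum_Ico_consecutive (fun t => f (τ t)) (Nat.zero_le t₁)
        (by omega : t₁ ≤ t₁ + k')]
    congr 1
    · congr 1
      · refine Finset.sum_congr rfl (fun t ht => ?_)
        have ht' := (Finset.mem_Ico.1 ht).2
        simp only [hτdef, splice]
        rw [if_pos ht']
      · rw [Finset.sum_Ico_eq_sum_range, Finset.sum_Ico_eq_sum_range]
        refine Finset.sum_congr (by congr 1; omega) (fun i hi => ?_)
        have hi' := Finset.mem_range.1 hi
        simp only [hτdef, splice]
        rw [if_neg (by omega), if_pos (by omega), Nat.add_sub_cancel_left, Nat.zero_add]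
    · rw [Finset.sum_Ico_eq_sum_range, Finset.sum_Ico_eq_sum_range]
      refine Finset.sum_congr (by congr 1; omega) (fun i hi => ?_)
      have hi' := Finset.mem_range.1 hi
      simp only [hτdef, splice]
      rw [if_neg (by omega), if_neg (by omega),
        show (t₁ + k' + i + t₂ + 1 - (t₁ + k') : ℕ) = t₂ + 1 + i by omega]
  -- middle segment comparison
  have hmid : (∑ s ∈ Finset.Ico 0 k', f (π' s)) <
      ∑ t ∈ Finset.Ico t₁ (t₂ + 1), f (π t) := by
    have hub : (∑ s ∈ Finset.Ico 0 k', f (π' s)) ≤ k' * M ^ (rk m n D v - 1) := by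
      calc (∑ s ∈ Finset.Ico 0 k', f (π' s))
          ≤ ∑ _s ∈ Finset.Ico 0 k', M ^ (rk m n D v - 1) := by
            refine Finset.sum_le_sum (fun s hs => ?_)
            have hs' := (Finset.mem_Ico.1 hs).2
            exact Nat.pow_le_pow_right (by omega)
              (by have := hrk s hs'; omega)
        _ = k' * M ^ (rk m n D v - 1) := by
            rw [Finset.sum_const, Nat.card_Ico, smul_eq_mul, Nat.sub_zero]
    have hlb : M ^ rk m n D v ≤ ∑ t ∈ Finset.Ico t₁ (t₂ + 1), f (π t) := by
      have hmem : tstar ∈ Finset.Ico t₁ (t₂ + 1) := by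
        have := Finset.mem_Icc.1 htmem
        exact Finset.mem_Ico.2 ⟨this.1, by omega⟩
      have : f (π tstar) = M ^ rk m n D v := by
        rw [hf]
        simp only
        rw [← htv]
      calc M ^ rk m n D v = f (π tstar) := this.symm
        _ ≤ ∑ t ∈ Finset.Ico t₁ (t₂ + 1), f (π t) :=
            Finset.single_le_sum (f := fun t => f (π t)) (fun i _ => Nat.zero_le _) hmem
    have hstep : k' * M ^ (rk m n D v - 1) < M ^ rk m n D v := by
      have : M ^ rk m n D v = M * M ^ (rk m n D v - 1) := by
        rw [← pow_succ']
        congr 1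
        omega
      rw [this]
      have hpos : 0 < M ^ (rk m n D v - 1) := Nat.pow_pos (by omega)
      exact Nat.mul_lt_mul_of_lt_of_le (by omega) le_rfl hpos
    omega
  have hlt : wt m n D τ K < wt m n D π k := by
    rw [hwπ, hwτ]
    omega
  exact absurd (hmin K τ hτ) (by omega)

lemma exists_base_path (m n : ℕ) :
    ∃ k π, IsGridPath π k ((0, 0) : ℕ × ℕ) (m, n) := by
  refine ⟨m + n + 1, fun t => if t ≤ m then (t, 0) else (m, t - m), by omega, ?_, ?_, ?_⟩
  · simp
  · show (if m + n + 1 - 1 ≤ m then ((m + n + 1 - 1 : ℕ), (0 : ℕ)) else (m, m + n + 1 - 1 - m)) = (m, n)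
    split_ifs with h <;> (congr 1 <;> omega)
  · intro i hi
    simp only [IsStep]
    split_ifs with h1 h2 h2 <;> simp <;> omega

end LCFM

theorem exists_locally_correct_discrete_frechet_matching {d : ℕ} (m n : ℕ)
    (p q : ℕ → EuclideanSpace ℝ (Fin d)) :
    ∃ (k : ℕ) (π : ℕ → ℕ × ℕ), IsGridPath π k (0, 0) (m, n) ∧
      ∀ t₁ t₂ : ℕ, t₁ ≤ t₂ → t₂ < k →
        IsLeast {r : NNReal | ∃ (k' : ℕ) (π' : ℕ → ℕ × ℕ),
            IsGridPath π' k' (π t₁) (π t₂) ∧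
            r = Finset.sup (Finset.Icc 0 (k' - 1))
                  (fun s => nndist (p (π' s).1) (q (π' s).2))}
          (Finset.sup (Finset.Icc t₁ t₂) (fun t => nndist (p (π t).1) (q (π t).2))) := by
  classical
  set D : ℕ × ℕ → NNReal := fun ij => nndist (p ij.1) (q ij.2) with hD
  set S : Set ℕ := {w | ∃ k π, IsGridPath π k (0, 0) (m, n) ∧ LCFM.wt m n D π k = w}
    with hS
  have hSne : S.Nonempty := by
    obtain ⟨k, π, hπ⟩ := LCFM.exists_base_path m n
    exact ⟨LCFM.wt m n D π k, k, π, hπ, rfl⟩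
  obtain ⟨k, π, hπ, hwt⟩ := Nat.sInf_mem hSne
  have hmin : ∀ k'' π'', IsGridPath π'' k'' (0, 0) (m, n) →
      LCFM.wt m n D π k ≤ LCFM.wt m n D π'' k'' := by
    intro k'' π'' h''
    rw [hwt]
    exact Nat.sInf_le ⟨k'', π'', h'', rfl⟩
  refine ⟨k, π, hπ, fun t₁ t₂ h12 h2k => ⟨?_, ?_⟩⟩
  · -- membership: the subpath itself
    refine ⟨t₂ - t₁ + 1, fun s => π (t₁ + s), ⟨by omega, by simp, ?_, ?_⟩, ?_⟩
    · simp only [Nat.add_sub_cancel]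
      congr 1
      omega
    · intro s hs
      have hstep := hπ.2.2.2 (t₁ + s) (by omega)
      show IsStep (π (t₁ + s)) (π (t₁ + (s + 1)))
      rw [show t₁ + (s + 1) = t₁ + s + 1 by omega]
      exact hstep
    · apply le_antisymm
      · apply Finset.sup_le
        intro t ht
        have ht' := Finset.mem_Icc.1 ht
        have hmem : t - t₁ ∈ Finset.Icc 0 (t₂ - t₁ + 1 - 1) :=
          Finset.mem_Icc.2 ⟨Nat.zero_le _, by omega⟩
        have : π (t₁ + (t - t₁)) = π t := by
          congr 1
          omega
        calc nndist (p (π t).1) (q (π t).2)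
            = nndist (p (π (t₁ + (t - t₁))).1) (q (π (t₁ + (t - t₁))).2) := by rw [this]
          _ ≤ _ := Finset.le_sup (f := fun s => nndist (p (π (t₁ + s)).1) (q (π (t₁ + s)).2)) hmem
      · apply Finset.sup_le
        intro s hs
        have hs' := Finset.mem_Icc.1 hs
        exact Finset.le_sup (f := fun t => nndist (p (π t).1) (q (π t).2))
          (Finset.mem_Icc.2 ⟨by omega, by omega⟩)
  · -- lower bound: the exchange argument
    rintro r ⟨k', π', hπ', rfl⟩
    exact LCFM.exchange m n D hπ hmin h12 h2k hπ'
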